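/- If an intersection of level-0 function types ⋀_{i∈I} (T_i → T'_i)^0 is congruent to a single function type (T → T')^0, then T_i ≡ T for all i ∈ I, and ⋀_{i∈I} T'_i ≡ T'. -/

import Mathlib

set_option linter.unusedVariables false

-- Primitive types and term types of the unbind/rebind calculus.
mutual
inductive PrimTy : Type where
  | int : PrimTy
  | code : PrimTy
  | arrow : Ty → Ty → PrimTy
inductive Ty : Type where
  | prim : PrimTy → ℕ → Ty
  | inter : Ty → Ty → Ty
end

/-- `T.raise k` increases all top-level conjunct levels by `k` (written `T^{+k}`). -/
def Ty.raise : Ty → ℕ → Ty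
  | .prim τ ℓ, k => .prim τ (ℓ + k)
  | .inter T1 T2, k => .inter (T1.raise k) (T2.raise k)

/-- Congruence on types. -/
inductive TyEq : Ty → Ty → Prop where
  | refl : TyEq T T
  | symm : TyEq T1 T2 → TyEq T2 T1
  | trans : TyEq T1 T2 → TyEq T2 T3 → TyEq T1 T3
  | interCongr : TyEq T1 T1' → TyEq T2 T2' → TyEq (.inter T1 T2) (.inter T1' T2')
  | arrowCongr : TyEq T1 T1' → TyEq T2 T2' →
      TyEq (.prim (.arrow T1 T2) ℓ) (.prim (.arrow T1' T2') ℓ)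
  | idem : TyEq T (.inter T T)
  | comm : TyEq (.inter T1 T2) (.inter T2 T1)
  | assoc : TyEq (.inter T1 (.inter T2 T3)) (.inter (.inter T1 T2) T3)
  | distrib : TyEq (.inter (.prim (.arrow T T1) ℓ) (.prim (.arrow T T2) ℓ))
      (.prim (.arrow T (.inter T1 T2)) ℓ)
  | shift : TyEq (.prim (.arrow T' (Ty.raise T ℓ')) (ℓ+1)) (.prim (.arrow T' (Ty.raise T (ℓ'+1))) ℓ)

/-- Subtyping on types. -/
inductive TySub : Ty → Ty → Prop where
  | int : TySub (.prim .int ℓ) (.prim .int (ℓ+1))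
  | interElim : TySub (.inter T1 T2) T1
  | arrow : TySub T2 T1 → TySub T1' T2' →
      TySub (.prim (.arrow T1 T1') ℓ) (.prim (.arrow T2 T2') ℓ)
  | mono : TySub T1 T1' → TySub T2 T2' → TySub (.inter T1 T2) (.inter T1' T2')
  | trans : TySub T1 T2 → TySub T2 T3 → TySub T1 T3
  | ofEq : TyEq T1 T2 → TySub T1 T2

/-- Value types: intersections with at least one conjunct of level 0. -/
inductive IsValueTy : Ty → Prop where
  | prim : IsValueTy (.prim τ 0)
  | inter : IsValueTy V → IsValueTy (.inter V T)

/-- `bigInter T Ts` is the intersection of the nonempty family `T :: Ts`. -/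
def bigInter : Ty → List Ty → Ty
  | T, [] => T
  | T, T' :: Ts => .inter T (bigInter T' Ts)

abbrev TCtx := List (String × Ty)

/-- Terms of the unbind/rebind calculus. -/
inductive Tm : Type where
  | var : String → Tm
  | num : ℤ → Tm
  | add : Tm → Tm → Tm
  | lam : String → Tm → Tm
  | app : Tm → Tm → Tm
  | unbind : TCtx → Tm → Tm
  | rebind : Tm → List (String × Ty × Tm) → Tm
  | error : Tm

abbrev TSubst := List (String × Ty × Tm)
abbrev USubst := List (String × Tm)

inductive IsValue : Tm → Prop where
  | lam : IsValue (.lam x t)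
  | unbind : IsValue (.unbind Γ t)
  | num : IsValue (.num n)

mutual
/-- Free variables of a term. -/
def FV : Tm → Finset String
  | .var x => {x}
  | .num _ => ∅
  | .add t1 t2 => FV t1 ∪ FV t2
  | .lam x t => FV t \ {x}
  | .app t1 t2 => FV t1 ∪ FV t2
  | .unbind Γ' t => FV t \ (Γ'.map Prod.fst).toFinset
  | .rebind t r => FV t ∪ FVr r
  | .error => ∅
/-- Free variables of a typed substitution. -/
def FVr : List (String × Ty × Tm) → Finset String
  | [] => ∅
  | p :: r => FV p.2.2 ∪ FVr r
end

/-- Free variables of an untyped substitution. -/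
def FVu (σ : USubst) : Finset String := σ.foldr (fun p acc => FV p.2 ∪ acc) ∅

mutual
/-- `SubstM t σ t'` : the (capture-avoiding, partial) application of the
substitution `σ` to `t` is defined and equals `t'`. -/
inductive SubstM : Tm → USubst → Tm → Prop where
  | varHit : σ.lookup x = some v → SubstM (.var x) σ v
  | varMiss : σ.lookup x = none → SubstM (.var x) σ (.var x)
  | num : SubstM (.num n) σ (.num n)
  | error : SubstM .error σ .error
  | add : SubstM t1 σ t1' → SubstM t2 σ t2' → SubstM (.add t1 t2) σ (.add t1' t2')
  | app : SubstM t1 σ t1' → SubstM t2 σ t2' → SubstM (.app t1 t2) σ (.app t1' t2')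
  | lam : x ∉ FVu σ → SubstM t (σ.filter (fun p => p.1 != x)) t' →
      SubstM (.lam x t) σ (.lam x t')
  | unbind : (∀ y ∈ Γ'.map Prod.fst, y ∉ FVu σ) →
      SubstM t (σ.filter (fun p => !(Γ'.map Prod.fst).contains p.1)) t' →
      SubstM (.unbind Γ' t) σ (.unbind Γ' t')
  | rebind : SubstM t σ t' → SubstML r σ r' → SubstM (.rebind t r) σ (.rebind t' r')
inductive SubstML : TSubst → USubst → TSubst → Prop where
  | nil : SubstML [] σ []
  | cons : SubstM u σ u' → SubstML r σ r' → SubstML ((x,T,u) :: r) σ ((x,T,u') :: r')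
end

mutual
/-- The intersection type system with levels. -/
inductive Typed : TCtx → Tm → Ty → Prop where
  | var : Γ.lookup x = some T → Typed Γ (.var x) T
  | num : Typed Γ (.num n) (.prim .int 0)
  | sum : Typed Γ t1 (.prim .int ℓ) → Typed Γ t2 (.prim .int ℓ) →
      Typed Γ (.add t1 t2) (.prim .int ℓ)
  | error : Typed Γ .error T
  | abs : Γ.lookup x = none → Typed ((x,T) :: Γ) t T' →
      Typed Γ (.lam x t) (.prim (.arrow T T') 0)
  | app : Typed Γ t1 (.prim (.arrow V T) 0) → IsValueTy V → Typed Γ t2 V →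
      Typed Γ (.app t1 t2) T
  | unbind0 : (∀ x ∈ Γ'.map Prod.fst, Γ.lookup x = none) → Typed (Γ' ++ Γ) t T →
      Typed Γ (.unbind Γ' t) (.prim .code 0)
  | unbind : (∀ x ∈ Γ'.map Prod.fst, Γ.lookup x = none) → Typed (Γ' ++ Γ) t T →
      Typed Γ (.unbind Γ' t) (T.raise 1)
  | rebind : Typed Γ t (T.raise 1) → SubstOk Γ r → Typed Γ (.rebind t r) T
  | inter : Typed Γ t T1 → Typed Γ t T2 → Typed Γ t (.inter T1 T2)
  | sub : Typed Γ t T → TySub T T' → Typed Γ t T'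
/-- `SubstOk Γ r` : the typed substitution `r` is well typed in `Γ`. -/
inductive SubstOk : TCtx → TSubst → Prop where
  | nil : SubstOk Γ []
  | cons : Typed Γ u V → IsValueTy V → TySub V T → SubstOk Γ r →
      SubstOk Γ ((x,T,u) :: r)
end

/-- All terms of a typed substitution are values. -/
def IsValSubst (r : TSubst) : Prop := ∀ p ∈ r, IsValue p.2.2

/-- `Γ' ⊆` the type context extracted from `r`. -/
def CtxSub (Γ' : TCtx) (r : TSubst) : Prop := ∀ x T, (x,T) ∈ Γ' → ∃ u, (x,T,u) ∈ r

/-- The untyped substitution extracted from `r`, restricted to variables in `xs`. -/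
def restrictTo (r : TSubst) (xs : List String) : USubst :=
  (r.filter (fun p => xs.contains p.1)).map (fun p => (p.1, p.2.2))

/-- Evaluation contexts. -/
inductive ECtx : Type where
  | hole : ECtx
  | addL : ECtx → Tm → ECtx
  | addR : ℤ → ECtx → ECtx
  | appL : ECtx → Tm → ECtx
  | appR : Tm → ECtx → ECtx
  | reb : Tm → TSubst → String → Ty → ECtx → ECtx

def plug : ECtx → Tm → Tm
  | .hole, u => u
  | .addL E t, u => .add (plug E u) t
  | .addR n E, u => .add (.num n) (plug E u)
  | .appL E t, u => .app (plug E u) t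
  | .appR v E, u => .app v (plug E u)
  | .reb t r x T E, u => .rebind t (r ++ [(x, T, plug E u)])

/-- Well-formed evaluation contexts (`v E` requires `v` a value). -/
inductive IsECtx : ECtx → Prop where
  | hole : IsECtx .hole
  | addL : IsECtx E → IsECtx (.addL E t)
  | addR : IsECtx E → IsECtx (.addR n E)
  | appL : IsECtx E → IsECtx (.appL E t)
  | appR : IsValue v → IsECtx E → IsECtx (.appR v E)
  | reb : IsECtx E → IsECtx (.reb t r x T E)

/-- Call-by-value reduction. -/
inductive Step : Tm → Tm → Prop where
  | sum : Step (.add (.num n1) (.num n2)) (.num (n1 + n2))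
  | app : IsValue v → SubstM t [(x, v)] t' → Step (.app (.lam x t) v) t'
  | rebindUnbindYes : IsValSubst r → CtxSub Γ' r →
      SubstM t (restrictTo r (Γ'.map Prod.fst)) t' →
      Step (.rebind (.unbind Γ' t) r) t'
  | rebindUnbindNo : IsValSubst r → ¬ CtxSub Γ' r →
      Step (.rebind (.unbind Γ' t) r) .error
  | rebindNum : IsValSubst r → Step (.rebind (.num n) r) (.num n)
  | rebindSum : IsValSubst r →
      Step (.rebind (.add t1 t2) r) (.add (.rebind t1 r) (.rebind t2 r))
  | rebindAbs : IsValSubst r → Step (.rebind (.lam x t) r) (.lam x (.rebind t r))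
  | rebindApp : IsValSubst r →
      Step (.rebind (.app t1 t2) r) (.app (.rebind t1 r) (.rebind t2 r))
  | rebindRebind : IsValSubst rv → Step (.rebind t r) t' →
      Step (.rebind (.rebind t r) rv) (.rebind t' rv)
  | rebindError : IsValSubst r → Step (.rebind .error r) .error
  | ctx : E ≠ .hole → IsECtx E → Step t t' → Step (plug E t) (plug E t')
  | ctxError : E ≠ .hole → IsECtx E → Step t .error → Step (plug E t) .error

/-- Level-0 arrow type from a pair of types. -/
def arr0 (p : Ty × Ty) : Ty := .prim (.arrow p.1 p.2) 0

/-- Primitive type with a level. -/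
def primL (p : PrimTy × ℕ) : Ty := .prim p.1 p.2

noncomputable section StmtZeroAux

local instance : DecidableEq Ty := Classical.decEq _

/-- Custom induction principle for `Ty`. -/
lemma Ty.myrec {P : Ty → Prop}
    (hint : ∀ ℓ, P (.prim .int ℓ)) (hcode : ∀ ℓ, P (.prim .code ℓ))
    (harrow : ∀ T1 T2 ℓ, P T1 → P T2 → P (.prim (.arrow T1 T2) ℓ))
    (hinter : ∀ T1 T2, P T1 → P T2 → P (.inter T1 T2)) : ∀ T, P T :=
  Ty.rec (motive_1 := fun τ => ∀ ℓ, P (.prim τ ℓ)) (motive_2 := P)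
    (fun ℓ => hint ℓ) (fun ℓ => hcode ℓ)
    (fun T1 T2 h1 h2 ℓ => harrow T1 T2 ℓ h1 h2)
    (fun τ ℓ hτ => hτ ℓ)
    (fun T1 T2 h1 h2 => hinter T1 T2 h1 h2)

def listInter : List Ty → Ty
  | [] => .prim .int 0
  | [t] => t
  | t :: u :: l => .inter t (listInter (u :: l))

lemma listInter_cons (t : Ty) (l : List Ty) (h : l ≠ []) :
    listInter (t :: l) = .inter t (listInter l) := by
  cases l with
  | nil => exact absurd rfl h
  | cons u l => rfl

lemma tyEq_absorb : ∀ (l : List Ty) (t : Ty), t ∈ l →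
    TyEq (listInter l) (.inter t (listInter l)) := by
  intro l
  induction l with
  | nil => intro t ht; cases ht
  | cons x l ih =>
    intro t ht
    cases l with
    | nil =>
      simp at ht; subst ht; exact TyEq.idem
    | cons u l' =>
      rw [listInter_cons x (u :: l') (by simp)]
      rcases List.mem_cons.mp ht with h | h
      · subst h
        exact (TyEq.interCongr TyEq.idem TyEq.refl).trans TyEq.assoc.symm
      · exact (TyEq.interCongr TyEq.refl (ih t h)).trans
          (TyEq.assoc.trans ((TyEq.interCongr TyEq.comm TyEq.refl).trans TyEq.assoc.symm))

lemma tyEq_sub : ∀ (l1 l2 : List Ty), l1 ≠ [] → l2 ≠ [] →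
    (∀ x ∈ l1, x ∈ l2) →
    TyEq (.inter (listInter l1) (listInter l2)) (listInter l2) := by
  intro l1
  induction l1 with
  | nil => simp
  | cons t l ih =>
    intro l2 _ h2 hsub
    cases l with
    | nil =>
      simpa [listInter] using (tyEq_absorb l2 t (hsub t (by simp))).symm
    | cons u l' =>
      rw [listInter_cons t (u::l') (by simp)]
      have h2' := ih l2 (by simp) h2 (fun x hx => hsub x (List.mem_cons_of_mem _ hx))
      exact TyEq.assoc.symm.trans ((TyEq.interCongr TyEq.refl h2').trans
        (tyEq_absorb l2 t (hsub t (by simp))).symm)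

lemma tyEq_aci (l1 l2 : List Ty) (h1 : l1 ≠ []) (h2 : l2 ≠ [])
    (h : ∀ x, x ∈ l1 ↔ x ∈ l2) : TyEq (listInter l1) (listInter l2) := by
  have a := tyEq_sub l2 l1 h2 h1 (fun x hx => (h x).mpr hx)
  have b := tyEq_sub l1 l2 h1 h2 (fun x hx => (h x).mp hx)
  exact a.symm.trans (TyEq.comm.trans b)

lemma tyEq_append : ∀ (l1 l2 : List Ty), l1 ≠ [] → l2 ≠ [] →
    TyEq (.inter (listInter l1) (listInter l2)) (listInter (l1 ++ l2)) := by
  intro l1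
  induction l1 with
  | nil => simp
  | cons t l ih =>
    intro l2 _ h2
    cases l with
    | nil =>
      rw [List.singleton_append, listInter_cons t l2 h2]
      exact TyEq.refl
    | cons u l' =>
      rw [listInter_cons t (u::l') (by simp), List.cons_append,
        listInter_cons t (u :: l' ++ l2) (by simp)]
      exact TyEq.assoc.symm.trans (TyEq.interCongr TyEq.refl (ih l2 (by simp) h2))

lemma tyEq_listInter_congr : ∀ {l1 l2 : List Ty}, List.Forall₂ TyEq l1 l2 →
    TyEq (listInter l1) (listInter l2) := by
  intro l1 l2 h
  induction h with
  | nil => exact TyEq.refl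
  | @cons a b l1' l2' hab ht ih =>
    cases ht with
    | nil => simpa [listInter] using hab
    | cons h' ht' =>
      rw [listInter_cons a _ (by simp), listInter_cons b _ (by simp)]
      exact TyEq.interCongr hab ih

lemma raise_zero : ∀ T : Ty, T.raise 0 = T := by
  intro T
  induction T using Ty.myrec with
  | hint ℓ => rfl
  | hcode ℓ => rfl
  | harrow T1 T2 ℓ h1 h2 => rfl
  | hinter T1 T2 h1 h2 => simp [Ty.raise, h1, h2]

lemma raise_raise : ∀ (T : Ty) (a b : ℕ), (T.raise a).raise b = T.raise (a + b) := by
  intro T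
  induction T using Ty.myrec with
  | hint ℓ => intro a b; simp [Ty.raise, Nat.add_assoc]
  | hcode ℓ => intro a b; simp [Ty.raise, Nat.add_assoc]
  | harrow T1 T2 ℓ h1 h2 => intro a b; simp [Ty.raise, Nat.add_assoc]
  | hinter T1 T2 h1 h2 => intro a b; simp [Ty.raise, h1, h2]

lemma raise_listInter : ∀ (l : List Ty) (k : ℕ), l ≠ [] →
    (listInter l).raise k = listInter (l.map (fun c => c.raise k)) := by
  intro l
  induction l with
  | nil => simp
  | cons t l ih =>
    intro k _
    cases l with
    | nil => rfl
    | cons u l' =>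
      rw [listInter_cons t _ (by simp), List.map_cons,
        listInter_cons (t.raise k) _ (by simp), ← ih k (by simp)]
      rfl

lemma tyEq_shift_iter2 (D X : Ty) : ∀ (k a b : ℕ),
    TyEq (.prim (.arrow D (X.raise a)) (b + k)) (.prim (.arrow D (X.raise (a + k))) b) := by
  intro k
  induction k with
  | zero => intro a b; exact TyEq.refl
  | succ k ih =>
    intro a b
    have h1 : TyEq (.prim (.arrow D (X.raise a)) ((b + k) + 1))
        (.prim (.arrow D (X.raise (a + 1))) (b + k)) := TyEq.shift
    have h2 := ih (a + 1) b
    have : a + 1 + k = a + (k + 1) := by omega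
    rw [this] at h2
    have : b + (k + 1) = (b + k) + 1 := by omega
    rw [this]
    exact h1.trans h2

lemma tyEq_shift_iter (D C : Ty) (ℓ : ℕ) :
    TyEq (.prim (.arrow D C) ℓ) (.prim (.arrow D (C.raise ℓ)) 0) := by
  have := tyEq_shift_iter2 D C ℓ 0 0
  simpa [raise_zero] using this

lemma tyEq_distribList (D : Ty) (ℓ : ℕ) : ∀ (l : List Ty), l ≠ [] →
    TyEq (.prim (.arrow D (listInter l)) ℓ)
      (listInter (l.map (fun c => .prim (.arrow D c) ℓ))) := by
  intro l
  induction l with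
  | nil => simp
  | cons t l ih =>
    intro _
    cases l with
    | nil => exact TyEq.refl
    | cons u l' =>
      have h1 : TyEq (Ty.prim (.arrow D (listInter (t :: u :: l'))) ℓ)
          (.inter (.prim (.arrow D t) ℓ) (.prim (.arrow D (listInter (u :: l'))) ℓ)) := by
        rw [listInter_cons t _ (by simp)]
        exact TyEq.distrib.symm
      refine h1.trans ?_
      rw [List.map_cons,
        listInter_cons _ (List.map (fun c => Ty.prim (.arrow D c) ℓ) (u :: l')) (by simp)]
      exact TyEq.interCongr TyEq.refl (ih (by simp))

/-- Raising of an "atom": raising pushed into arrow codomains. -/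
def atomRaise (k : ℕ) : Ty → Ty
  | .prim (.arrow D c) m => .prim (.arrow D (atomRaise k c)) m
  | .prim .int m => .prim .int (m + k)
  | .prim .code m => .prim .code (m + k)
  | .inter a b => .inter (atomRaise k a) (atomRaise k b)

lemma atomRaise_zero : ∀ c : Ty, atomRaise 0 c = c := by
  intro c
  induction c using Ty.myrec with
  | hint ℓ => rfl
  | hcode ℓ => rfl
  | harrow T1 T2 ℓ h1 h2 => simp [atomRaise, h2]
  | hinter T1 T2 h1 h2 => simp [atomRaise, h1, h2]

lemma atomRaise_add : ∀ (c : Ty) (a b : ℕ), atomRaise b (atomRaise a c) = atomRaise (a + b) c := by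
  intro c
  induction c using Ty.myrec with
  | hint ℓ => intro a b; simp [atomRaise, Nat.add_assoc]
  | hcode ℓ => intro a b; simp [atomRaise, Nat.add_assoc]
  | harrow T1 T2 ℓ h1 h2 => intro a b; simp [atomRaise, h2]
  | hinter T1 T2 h1 h2 => intro a b; simp [atomRaise, h1, h2]

lemma tyEq_raise_atomRaise : ∀ (c : Ty) (k : ℕ), TyEq (c.raise k) (atomRaise k c) := by
  intro c
  induction c using Ty.myrec with
  | hint ℓ => intro k; exact TyEq.refl
  | hcode ℓ => intro k; exact TyEq.refl
  | harrow D c' m h1 h2 =>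
    intro k
    show TyEq (.prim (.arrow D c') (m + k)) (.prim (.arrow D (atomRaise k c')) m)
    have h := tyEq_shift_iter2 D c' k 0 m
    rw [raise_zero, Nat.zero_add] at h
    exact h.trans (TyEq.arrowCongr TyEq.refl (h2 k))
  | hinter T1 T2 h1 h2 =>
    intro k
    exact TyEq.interCongr (h1 k) (h2 k)

/-- Atoms of a type: a canonical finite set of conjuncts invariant under `TyEq`. -/
def atoms : Ty → Finset Ty
  | .prim .int ℓ => {.prim .int ℓ}
  | .prim .code ℓ => {.prim .code ℓ}
  | .prim (.arrow T1 T2) ℓ =>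
      (atoms T2).image (fun c => .prim (.arrow (listInter (atoms T1).toList) (atomRaise ℓ c)) 0)
  | .inter T1 T2 => atoms T1 ∪ atoms T2

lemma atoms_nonempty : ∀ T : Ty, (atoms T).Nonempty := by
  intro T
  induction T using Ty.myrec with
  | hint ℓ => exact ⟨_, Finset.mem_singleton_self _⟩
  | hcode ℓ => exact ⟨_, Finset.mem_singleton_self _⟩
  | harrow T1 T2 ℓ h1 h2 => exact h2.image _
  | hinter T1 T2 h1 h2 => exact h1.mono Finset.subset_union_left

lemma toList_ne_nil {s : Finset Ty} (h : s.Nonempty) : s.toList ≠ [] := by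
  simp [Finset.toList_eq_nil]
  exact h.ne_empty

lemma atoms_raise : ∀ (T : Ty) (k : ℕ), atoms (T.raise k) = (atoms T).image (atomRaise k) := by
  intro T
  induction T using Ty.myrec with
  | hint ℓ => intro k; simp [Ty.raise, atoms, atomRaise]
  | hcode ℓ => intro k; simp [Ty.raise, atoms, atomRaise]
  | harrow T1 T2 ℓ h1 h2 =>
    intro k
    show atoms (.prim (.arrow T1 T2) (ℓ + k)) = _
    rw [atoms, atoms, Finset.image_image]
    apply Finset.image_congr
    intro c _
    simp [Function.comp, atomRaise, atomRaise_add]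
  | hinter T1 T2 h1 h2 =>
    intro k
    simp [Ty.raise, atoms, h1, h2, Finset.image_union]

/-- Soundness: congruent types have equal atoms. -/
lemma atoms_sound {T1 T2 : Ty} (h : TyEq T1 T2) : atoms T1 = atoms T2 := by
  induction h with
  | refl => rfl
  | symm _ ih => exact ih.symm
  | trans _ _ ih1 ih2 => exact ih1.trans ih2
  | interCongr _ _ ih1 ih2 => simp [atoms, ih1, ih2]
  | arrowCongr _ _ ih1 ih2 => simp [atoms, ih1, ih2]
  | idem => simp [atoms]
  | comm => simp [atoms, Finset.union_comm]
  | assoc => simp [atoms, Finset.union_assoc]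
  | distrib => simp [atoms, Finset.image_union]
  | @shift T' T ℓ' ℓ =>
    show atoms (.prim (.arrow T' (T.raise ℓ')) (ℓ+1)) = atoms (.prim (.arrow T' (T.raise (ℓ'+1))) ℓ)
    rw [atoms, atoms, atoms_raise, atoms_raise, Finset.image_image, Finset.image_image]
    apply Finset.image_congr
    intro c _
    simp [Function.comp, atomRaise_add]
    congr 1
    omega

lemma forall₂_map (f g : Ty → Ty) (h : ∀ c, TyEq (f c) (g c)) :
    ∀ l : List Ty, List.Forall₂ TyEq (l.map f) (l.map g) := by
  intro l
  induction l with
  | nil => exact List.Forall₂.nil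
  | cons t l ih => exact List.Forall₂.cons (h t) ih

/-- Completeness: every type is congruent to the intersection of its atoms. -/
lemma atoms_complete : ∀ T : Ty, TyEq T (listInter (atoms T).toList) := by
  intro T
  induction T using Ty.myrec with
  | hint ℓ => simp [atoms, Finset.toList_singleton, listInter]; exact TyEq.refl
  | hcode ℓ => simp [atoms, Finset.toList_singleton, listInter]; exact TyEq.refl
  | harrow T1 T2 ℓ ih1 ih2 =>
    have hl2 : (atoms T2).toList ≠ [] := toList_ne_nil (atoms_nonempty T2)
    set D := listInter (atoms T1).toList with hD
    set l2 := (atoms T2).toList with hl2def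
    have step1 : TyEq (.prim (.arrow T1 T2) ℓ) (.prim (.arrow D (listInter l2)) ℓ) :=
      TyEq.arrowCongr ih1 ih2
    have step2 : TyEq (.prim (.arrow D (listInter l2)) ℓ)
        (.prim (.arrow D ((listInter l2).raise ℓ)) 0) := tyEq_shift_iter D (listInter l2) ℓ
    rw [raise_listInter l2 ℓ hl2] at step2
    have step3 := tyEq_distribList D 0 ((l2.map (fun c => c.raise ℓ))) (by simp [hl2])
    have step4 : List.Forall₂ TyEq
        ((l2.map (fun c => c.raise ℓ)).map (fun c => Ty.prim (.arrow D c) 0))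
        (l2.map (fun c => Ty.prim (.arrow D (atomRaise ℓ c)) 0)) := by
      rw [List.map_map]
      exact forall₂_map _ _
        (fun c => TyEq.arrowCongr TyEq.refl (tyEq_raise_atomRaise c ℓ)) l2
    have step5 : TyEq
        (listInter (l2.map (fun c => Ty.prim (.arrow D (atomRaise ℓ c)) 0)))
        (listInter (atoms (Ty.prim (.arrow T1 T2) ℓ)).toList) := by
      apply tyEq_aci
      · simp [hl2]
      · exact toList_ne_nil (atoms_nonempty _)
      · intro x
        simp only [List.mem_map, Finset.mem_toList, atoms, Finset.mem_image, hl2def, hD]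
    exact step1.trans (step2.trans (step3.trans ((tyEq_listInter_congr step4).trans step5)))
  | hinter T1 T2 ih1 ih2 =>
    have h1 : (atoms T1).toList ≠ [] := toList_ne_nil (atoms_nonempty T1)
    have h2 : (atoms T2).toList ≠ [] := toList_ne_nil (atoms_nonempty T2)
    have step1 : TyEq (.inter T1 T2)
        (.inter (listInter (atoms T1).toList) (listInter (atoms T2).toList)) :=
      TyEq.interCongr ih1 ih2
    have step2 := tyEq_append (atoms T1).toList (atoms T2).toList h1 h2
    have step3 : TyEq (listInter ((atoms T1).toList ++ (atoms T2).toList))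
        (listInter (atoms (Ty.inter T1 T2)).toList) := by
      apply tyEq_aci
      · simp [h1]
      · exact toList_ne_nil (atoms_nonempty _)
      · intro x
        simp [atoms]
    exact step1.trans (step2.trans step3)

lemma atoms_bigInter_mem : ∀ (ts : List Ty) (t : Ty) (x : Ty),
    x ∈ atoms (bigInter t ts) ↔ ∃ s ∈ t :: ts, x ∈ atoms s := by
  intro ts
  induction ts with
  | nil => intro t x; simp [bigInter]
  | cons u ts ih =>
    intro t x
    show x ∈ atoms (.inter t (bigInter u ts)) ↔ _
    rw [atoms]
    simp only [Finset.mem_union, ih u x, List.mem_cons]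
    constructor
    · rintro (h | ⟨s, hs, hx⟩)
      · exact ⟨t, Or.inl rfl, h⟩
      · exact ⟨s, Or.inr hs, hx⟩
    · rintro ⟨s, (rfl | hs), hx⟩
      · exact Or.inl hx
      · exact Or.inr ⟨s, hs, hx⟩

end StmtZeroAux

/-- inversion of congruence for intersections of level-0 arrows. -/
theorem stmt0 (p : Ty × Ty) (ps : List (Ty × Ty)) (T T' : Ty)
    (h : TyEq (bigInter (arr0 p) (ps.map arr0)) (.prim (.arrow T T') 0)) :
    (∀ q ∈ p :: ps, TyEq q.1 T) ∧ TyEq (bigInter p.2 (ps.map Prod.snd)) T' := by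
  classical
  have hA := atoms_sound h
  -- membership characterization of the LHS atoms
  have hmemL : ∀ x : Ty, x ∈ atoms (bigInter (arr0 p) (ps.map arr0)) ↔
      ∃ q ∈ p :: ps, x ∈ atoms (arr0 q) := by
    intro x
    rw [atoms_bigInter_mem]
    constructor
    · rintro ⟨s, hs, hx⟩
      rcases List.mem_cons.mp hs with rfl | hs
      · exact ⟨p, by simp, hx⟩
      · rcases List.mem_map.mp hs with ⟨q, hq, rfl⟩
        exact ⟨q, by simp [hq], hx⟩
    · rintro ⟨q, hq, hx⟩
      rcases List.mem_cons.mp hq with rfl | hq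
      · exact ⟨arr0 q, by simp, hx⟩
      · exact ⟨arr0 q, List.mem_cons_of_mem _ (List.mem_map_of_mem hq), hx⟩
  -- atoms of the RHS arrow
  have hR : atoms (Ty.prim (.arrow T T') 0) =
      (atoms T').image
        (fun c => Ty.prim (.arrow (listInter (atoms T).toList) (atomRaise 0 c)) 0) := by
    rfl
  have hQ : ∀ q ∈ p :: ps, atoms (arr0 q) =
      (atoms q.2).image
        (fun c => Ty.prim (.arrow (listInter (atoms q.1).toList) (atomRaise 0 c)) 0) := by
    intro q _; rfl
  constructor
  · intro q hq
    obtain ⟨c, hc⟩ := atoms_nonempty q.2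
    have he : (Ty.prim (.arrow (listInter (atoms q.1).toList) (atomRaise 0 c)) 0 : Ty)
        ∈ atoms (arr0 q) := by
      rw [hQ q hq]; exact Finset.mem_image_of_mem _ hc
    have he2 : (Ty.prim (.arrow (listInter (atoms q.1).toList) (atomRaise 0 c)) 0 : Ty)
        ∈ atoms (Ty.prim (.arrow T T') 0) := by
      rw [← hA]
      exact (hmemL _).mpr ⟨q, hq, he⟩
    rw [hR] at he2
    rcases Finset.mem_image.mp he2 with ⟨c', hc', heq⟩
    simp only [Ty.prim.injEq, PrimTy.arrow.injEq, and_true] at heq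
    have hdom : listInter (atoms T).toList = listInter (atoms q.1).toList := heq.1
    exact (atoms_complete q.1).trans (hdom ▸ (atoms_complete T).symm)
  · -- second part: atoms of the intersection of codomains equals atoms T'
    have hkey : atoms (bigInter p.2 (ps.map Prod.snd)) = atoms T' := by
      apply Finset.ext
      intro x
      rw [atoms_bigInter_mem]
      constructor
      · rintro ⟨s, hs, hx⟩
        -- find q with s = q.2
        have : ∃ q ∈ p :: ps, s = q.2 := by
          rcases List.mem_cons.mp hs with rfl | hs
          · exact ⟨p, by simp, rfl⟩
          · rcases List.mem_map.mp hs with ⟨q, hq, rfl⟩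
            exact ⟨q, by simp [hq], rfl⟩
        rcases this with ⟨q, hq, rfl⟩
        have he : (Ty.prim (.arrow (listInter (atoms q.1).toList) (atomRaise 0 x)) 0 : Ty)
            ∈ atoms (Ty.prim (.arrow T T') 0) := by
          rw [← hA]
          refine (hmemL _).mpr ⟨q, hq, ?_⟩
          rw [hQ q hq]; exact Finset.mem_image_of_mem _ hx
        rw [hR] at he
        rcases Finset.mem_image.mp he with ⟨c', hc', heq⟩
        simp only [Ty.prim.injEq, PrimTy.arrow.injEq, and_true] at heq
        have h4 := heq.2
        rw [atomRaise_zero, atomRaise_zero] at h4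
        exact h4 ▸ hc'
      · intro hx
        have he : (Ty.prim (.arrow (listInter (atoms T).toList) (atomRaise 0 x)) 0 : Ty)
            ∈ atoms (bigInter (arr0 p) (ps.map arr0)) := by
          rw [hA, hR]
          exact Finset.mem_image_of_mem _ hx
        rcases (hmemL _).mp he with ⟨q, hq, hx'⟩
        rw [hQ q hq] at hx'
        rcases Finset.mem_image.mp hx' with ⟨c, hc, heq⟩
        have hcx : c = x := by
          simp only [Ty.prim.injEq, PrimTy.arrow.injEq, and_true] at heq
          have h4 := heq.2
          rw [atomRaise_zero, atomRaise_zero] at h4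
          exact h4
        refine ⟨q.2, ?_, hcx ▸ hc⟩
        rcases List.mem_cons.mp hq with rfl | hq
        · exact List.mem_cons_self
        · exact List.mem_cons_of_mem _ (List.mem_map_of_mem hq)
    exact (atoms_complete _).trans (hkey ▸ (atoms_complete T').symm)
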